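/- The residue of ζ(s) = 4^{-s}/(1 − 2^{-s} − 4^{-s}) at any pole of the form s = D + i·n·(2π/log 2), with D = log φ/log 2 and φ = (1+√5)/2, equals (3 − φ)/(5 log 2), independently of n ∈ ℤ. -/

import Mathlib

open Complex Filter

lemma four_cpow' (s : ℂ) : (4 : ℂ) ^ (-s) = ((2 : ℂ) ^ (-s)) ^ 2 := by
  have h4 : (4:ℂ) ≠ 0 := by norm_num
  have h2 : (2:ℂ) ≠ 0 := by norm_num
  rw [Complex.cpow_def_of_ne_zero h4, Complex.cpow_def_of_ne_zero h2, sq, ← Complex.exp_add]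
  congr 1
  have l4 : Complex.log 4 = 2 * Complex.log 2 := by
    rw [show (4:ℂ) = ((4:ℝ):ℂ) by norm_num, show (2:ℂ) = ((2:ℝ):ℂ) by norm_num,
      ← Complex.ofReal_log (by norm_num : (0:ℝ) ≤ 4),
      ← Complex.ofReal_log (by norm_num : (0:ℝ) ≤ 2),
      show (4:ℝ) = 2^2 by norm_num, Real.log_pow]
    push_cast; ring
  rw [l4]; ring

theorem fibonacciString_residue (n : ℤ) :
    Tendsto
      (fun s : ℂ => (s - (Real.log ((1 + Real.sqrt 5) / 2) / Real.log 2 +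
          (n : ℂ) * (2 * Real.pi / Real.log 2) * I)) *
        ((4 : ℂ) ^ (-s) / (1 - (2 : ℂ) ^ (-s) - (4 : ℂ) ^ (-s))))
      (nhdsWithin (Real.log ((1 + Real.sqrt 5) / 2) / Real.log 2 +
          (n : ℂ) * (2 * Real.pi / Real.log 2) * I)
        {(Real.log ((1 + Real.sqrt 5) / 2) / Real.log 2 +
          (n : ℂ) * (2 * Real.pi / Real.log 2) * I : ℂ)}ᶜ)
      (nhds (((3 - (1 + Real.sqrt 5) / 2) / (5 * Real.log 2) : ℝ) : ℂ)) := by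
  have hs5 : Real.sqrt 5 ^ 2 = 5 := Real.sq_sqrt (by norm_num)
  have hs5nn : 0 ≤ Real.sqrt 5 := Real.sqrt_nonneg 5
  set φ : ℝ := (1 + Real.sqrt 5) / 2 with hφdef
  have hφpos : 0 < φ := by rw [hφdef]; linarith
  have hφsq : φ ^ 2 = φ + 1 := by rw [hφdef]; field_simp; nlinarith
  have hL2pos : 0 < Real.log 2 := Real.log_pos (by norm_num)
  have hL2ne : (Real.log 2 : ℂ) ≠ 0 := by exact_mod_cast hL2pos.ne'
  set ω : ℂ := (Real.log φ : ℂ) / (Real.log 2 : ℂ) + (n : ℂ) * (2 * Real.pi / Real.log 2) * I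
    with hωdef
  have hlog2 : Complex.log 2 = (Real.log 2 : ℂ) := by
    rw [show (2:ℂ) = ((2:ℝ):ℂ) by norm_num]
    exact (Complex.ofReal_log (by norm_num)).symm
  have hlog4 : Complex.log 4 = 2 * (Real.log 2 : ℂ) := by
    rw [show (4:ℂ) = ((4:ℝ):ℂ) by norm_num, ← Complex.ofReal_log (by norm_num : (0:ℝ) ≤ 4),
      show (4:ℝ) = 2^2 by norm_num, Real.log_pow]
    push_cast; ring
  have hln : Complex.log 2 ≠ 0 := by rw [hlog2]; exact hL2ne
  -- value of 2^(-ω)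
  have h2ω : (2:ℂ) ^ (-ω) = ((φ⁻¹ : ℝ) : ℂ) := by
    rw [Complex.cpow_def_of_ne_zero (by norm_num), hlog2, hωdef]
    have key : (-((Real.log φ : ℂ) / (Real.log 2 : ℂ) + (n : ℂ) * (2 * Real.pi / Real.log 2) * I))
        * (Real.log 2 : ℂ)
        = ((-(Real.log φ) : ℝ) : ℂ) + ((-n : ℤ) : ℂ) * (2 * (Real.pi : ℂ) * I) := by
      push_cast
      field_simp [hln]
      ring
    rw [mul_comm, key, Complex.exp_add, Complex.exp_int_mul_two_pi_mul_I, mul_one,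
      ← Complex.ofReal_exp, Real.exp_neg, Real.exp_log hφpos]
  have h4ω : (4:ℂ) ^ (-ω) = (((φ⁻¹)^2 : ℝ) : ℂ) := by
    rw [four_cpow', h2ω]; push_cast; ring
  -- denominator vanishes at ω
  have hgω : (1:ℂ) - (2:ℂ)^(-ω) - (4:ℂ)^(-ω) = 0 := by
    rw [h2ω, h4ω]
    have : (1:ℝ) - φ⁻¹ - (φ⁻¹)^2 = 0 := by
      field_simp
      nlinarith [hφsq]
    calc (1:ℂ) - ((φ⁻¹ : ℝ):ℂ) - (((φ⁻¹)^2 : ℝ):ℂ)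
        = (((1:ℝ) - φ⁻¹ - (φ⁻¹)^2 : ℝ) : ℂ) := by push_cast; ring
      _ = 0 := by rw [this]; norm_num
  -- derivative of denominator at ω
  set d : ℝ := Real.log 2 * φ⁻¹ + 2 * Real.log 2 * (φ⁻¹)^2 with hddef
  have hdpos : 0 < d := by rw [hddef]; positivity
  have hdne : (d : ℂ) ≠ 0 := by exact_mod_cast hdpos.ne'
  have h2d : HasDerivAt (fun s : ℂ => (2:ℂ)^(-s)) ((2:ℂ)^(-ω) * Complex.log 2 * (-1)) ω :=
    HasDerivAt.const_cpow (hasDerivAt_neg ω) (Or.inl (by norm_num))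
  have h4d : HasDerivAt (fun s : ℂ => (4:ℂ)^(-s)) ((4:ℂ)^(-ω) * Complex.log 4 * (-1)) ω :=
    HasDerivAt.const_cpow (hasDerivAt_neg ω) (Or.inl (by norm_num))
  have hg : HasDerivAt (fun s : ℂ => 1 - (2:ℂ)^(-s) - (4:ℂ)^(-s)) ((d:ℂ)) ω := by
    have := ((hasDerivAt_const ω (1:ℂ)).sub h2d).sub h4d
    refine this.congr_deriv ?_
    rw [h2ω, h4ω, hlog2, hlog4, hddef]
    push_cast
    ring
  -- slope tendsto
  have hslope : Tendsto (slope (fun s : ℂ => 1 - (2:ℂ)^(-s) - (4:ℂ)^(-s)) ω)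
      (nhdsWithin ω {ω}ᶜ) (nhds (d:ℂ)) := hasDerivAt_iff_tendsto_slope.mp hg
  have hinv : Tendsto (fun s => (slope (fun s : ℂ => 1 - (2:ℂ)^(-s) - (4:ℂ)^(-s)) ω s)⁻¹)
      (nhdsWithin ω {ω}ᶜ) (nhds ((d:ℂ))⁻¹) := hslope.inv₀ hdne
  have hh : Tendsto (fun s : ℂ => (4:ℂ)^(-s)) (nhdsWithin ω {ω}ᶜ) (nhds ((4:ℂ)^(-ω))) :=
    h4d.continuousAt.continuousWithinAt
  have hmul := hh.mul hinv
  -- final value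
  have hval : (4:ℂ)^(-ω) * ((d:ℂ))⁻¹ = (((3 - φ) / (5 * Real.log 2) : ℝ) : ℂ) := by
    rw [h4ω, ← Complex.ofReal_inv, ← Complex.ofReal_mul]
    congr 1
    rw [hddef]
    rw [eq_div_iff (by positivity)]
    field_simp
    linear_combination (Real.log 2 * φ) * hφsq + (1/4 - Real.log 2/8 - Real.log 2 * Real.sqrt 5/8) * hs5
  rw [hval] at hmul
  refine hmul.congr ?_
  intro s
  rw [slope_def_field, hgω, sub_zero, inv_div]
  ring
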